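/- Let M1 and M2 be equivalent total deterministic top-down tree transducers with state sets Q1, Q2 over input alphabet Σ. Then their height-balance is bounded by c = max{ height(rhs(Mi, q, a)) : i ∈ {1,2}, q ∈ Qi, a ∈ Σ^(0) }, the maximal height of a right-hand side of a rule for an input symbol of rank 0: for every input tree s and node u of s, |height(M1(s[u←x])) − height(M2(s[u←x]))| ≤ c. -/

import Mathlib

/-! ## Finite ordered ranked trees -/

/-- Finite ordered labeled trees. -/
inductive RTree (α : Type) : Type
  | node : α → List (RTree α) → RTree α

namespace RTree

variable {α β : Type}

/-- The label of the root node. -/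
def label : RTree α → α
  | node a _ => a

mutual
  /-- The size (number of nodes) of a tree. -/
  def size : RTree α → ℕ
    | node _ ts => 1 + sizeList ts
  def sizeList : List (RTree α) → ℕ
    | [] => 0
    | t :: ts => size t + sizeList ts
end

mutual
  /-- The height of a tree (a leaf has height 1). -/
  def height : RTree α → ℕ
    | node _ ts => 1 + heightList ts
  def heightList : List (RTree α) → ℕ
    | [] => 0
    | t :: ts => max (height t) (heightList ts)
end

mutual
  /-- Relabeling of a tree. -/
  def map (f : α → β) : RTree α → RTree β
    | node a ts => node (f a) (mapList f ts)
  def mapList (f : α → β) : List (RTree α) → List (RTree β)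
    | [] => []
    | t :: ts => map f t :: mapList f ts
end

/-- `WF rk t` means `t` is a tree over the ranked alphabet with rank function `rk`:
every node labeled `a` has exactly `rk a` children.  Thus `T_Σ = {t | WF rk t}`. -/
inductive WF (rk : α → ℕ) : RTree α → Prop
  | node {a : α} {ts : List (RTree α)} :
      ts.length = rk a → (∀ t ∈ ts, WF rk t) → WF rk (node a ts)

/-- `SubtreeAt t u r`: `u` is (the Dewey path of) a node of `t` and `r` is the
subtree of `t` rooted at `u`. -/
inductive SubtreeAt : RTree α → List ℕ → RTree α → Prop
  | here (t : RTree α) : SubtreeAt t [] t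
  | child {a : α} {ts : List (RTree α)} {i : ℕ} {u : List ℕ} {ti r : RTree α} :
      ts[i]? = some ti → SubtreeAt ti u r → SubtreeAt (node a ts) (i :: u) r

/-- `ReplaceAt t u r t'`: `u` is a node of `t`, and `t'` is the tree `t[u ← r]`
obtained from `t` by replacing the subtree rooted at `u` by `r`. -/
inductive ReplaceAt : RTree α → List ℕ → RTree α → RTree α → Prop
  | here (t r : RTree α) : ReplaceAt t [] r r
  | child {a : α} {ts : List (RTree α)} {i : ℕ} {u : List ℕ} {r ti ti' : RTree α} :
      ts[i]? = some ti → ReplaceAt ti u r ti' →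
      ReplaceAt (node a ts) (i :: u) r (node a (ts.set i ti'))

end RTree

/-- A (complete) deterministic finite-state bottom-up tree automaton over the
alphabet `S`, with state set `P` and final states `final`. -/
structure BUA (S P : Type) where
  delta : S → List P → P
  final : Set P

variable {S P : Type}

mutual
  /-- The state reached by a bottom-up automaton on a tree. -/
  def buaRun (A : BUA S P) : RTree S → P
    | .node a ts => A.delta a (buaRunList A ts)
  def buaRunList (A : BUA S P) : List (RTree S) → List P
    | [] => []
    | t :: ts => buaRun A t :: buaRunList A ts
end

/-- A tree language over the ranked alphabet `(S, rk)` is regular if it is recognized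
by a deterministic finite-state bottom-up tree automaton. -/
def RegularTreeLang (rk : S → ℕ) (L : Set (RTree S)) : Prop :=
  ∃ (P : Type) (_ : Fintype P) (A : BUA S P),
    L = {t | RTree.WF rk t ∧ buaRun A t ∈ A.final}
/-! ## Deterministic macro tree transducers

A state of rank `m+1` is encoded by `prm q = m` (its number of context parameters).
Right-hand sides of rules are trees over `Δ ∪ Q ∪ X ∪ Y`, where every `Q`-labeled
node has an input variable `x_i` as its (implicit) first child; this is encoded by
the constructor `MRhs.call q i ps`.  A top-down tree transducer is exactly a macro
tree transducer all of whose states have rank one (`prm q = 0`).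

To be able to talk about partial inputs `s[u ← x]`, input trees are trees over
`Option S`, where `none` plays the role of the fresh rank-0 symbol `x`; an
ordinary input tree `s` is represented as `RTree.map some s`.  Outputs (sentential
forms) are trees over the alphabet `PL Q D`: output symbols `PL.out d`, unresolved
state calls `PL.st q` (i.e. `q(x, t₁, …, t_m)`, whose children are the current
parameter trees), and formal context parameters `PL.pr j` (i.e. `y_{j+1}`). -/

/-- Labels of sentential forms produced by a macro tree transducer. -/
inductive PL (Q D : Type) : Type
  | out : D → PL Q D
  | st : Q → PL Q D
  | pr : ℕ → PL Q D

/-- Right-hand sides of rules of a macro tree transducer with states `Q` and output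
alphabet `D`: `out d ts` is an output symbol with subtrees, `param j` is the context
parameter `y_{j+1}`, and `call q i ps` is a state call `q(x_{i+1}, ps)`. -/
inductive MRhs (Q D : Type) : Type
  | out : D → List (MRhs Q D) → MRhs Q D
  | param : ℕ → MRhs Q D
  | call : Q → ℕ → List (MRhs Q D) → MRhs Q D

/-- Well-formedness of a right-hand side for a rule of a state with `m` parameters
and an input symbol of rank `k`: output symbols have the right number of children,
parameters are among `y_1, …, y_m`, input variables are among `x_1, …, x_k`, and a
call of state `q'` passes exactly `prm q'` parameter trees. -/
inductive RhsWF {Q D : Type} (rkD : D → ℕ) (prm : Q → ℕ) (k m : ℕ) : MRhs Q D → Prop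
  | out {d ts} : ts.length = rkD d → (∀ t ∈ ts, RhsWF rkD prm k m t) →
      RhsWF rkD prm k m (.out d ts)
  | param {j} : j < m → RhsWF rkD prm k m (.param j)
  | call {q i ps} : i < k → ps.length = prm q → (∀ t ∈ ps, RhsWF rkD prm k m t) →
      RhsWF rkD prm k m (.call q i ps)

/-- A deterministic macro tree transducer with states `Q`, input alphabet `(S, rkS)`
and output alphabet `(D, rkD)`.  `prm q` is the number of context parameters of
state `q` (so `q` has rank `prm q + 1`); `rules q σ` is the right-hand side of the
`(q,σ)`-rule, if present (determinism: at most one rule per pair). -/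
structure MTT (Q S D : Type) where
  rkS : S → ℕ
  rkD : D → ℕ
  prm : Q → ℕ
  init : Q
  rules : Q → S → Option (MRhs Q D)

namespace MTT

variable {Q S D : Type}

/-- `M` is a well-formed macro tree transducer: the initial state has rank one and
all right-hand sides are well-formed. -/
def Proper (M : MTT Q S D) : Prop :=
  M.prm M.init = 0 ∧
    ∀ q σ r, M.rules q σ = some r → RhsWF M.rkD M.prm (M.rkS σ) (M.prm q) r

/-- `M` is total: there is exactly one rule for every state and input symbol. -/
def Total (M : MTT Q S D) : Prop := ∀ q σ, (M.rules q σ).isSome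

end MTT

/-- A top-down tree transducer is a macro tree transducer each of whose states has
rank one, i.e. no context parameters. -/
def IsTopDown {Q S D : Type} (M : MTT Q S D) : Prop := ∀ q, M.prm q = 0

/-- A macro tree transducer is monadic if its input and output ranked alphabets
only contain symbols of rank 1 and rank 0. -/
def MTT.Monadic {Q S D : Type} (M : MTT Q S D) : Prop :=
  (∀ σ, M.rkS σ ≤ 1) ∧ (∀ d, M.rkD d ≤ 1)

variable {Q S D : Type}

mutual
  /-- Second-order substitution of the parameter leaves `y_{j+1}` of a sentential
  form by the trees `vs`. -/
  def psubst (vs : List (RTree (PL Q D))) : RTree (PL Q D) → RTree (PL Q D)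
    | .node (.pr j) _ => vs.getD j (.node (.pr j) [])
    | .node (.out d) ts => .node (.out d) (psubstList vs ts)
    | .node (.st q) ts => .node (.st q) (psubstList vs ts)
  def psubstList (vs : List (RTree (PL Q D))) :
      List (RTree (PL Q D)) → List (RTree (PL Q D))
    | [] => []
    | t :: ts => psubst vs t :: psubstList vs ts
end

/-- The fresh rank-0 input symbol `x` used in partial inputs `s[u ← x]`. -/
def xLeaf {S : Type} : RTree (Option S) := .node none []

mutual
  /-- Big-step semantics of a macro tree transducer: `MEval M q s t` means that the
  computation of `M` started in state `q` on the input tree `s` (a tree over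
  `Option S`, where `none` is the fresh symbol `x` of partial inputs) produces the
  (sentential form) tree `t`.  On the symbol `x` the computation blocks, yielding
  the unresolved call `q(x, y_1, …, y_m)`.  For `s ∈ T_Σ` (no occurrence of `x`)
  and well-formed transducers, `t` contains no `PL.st` labels, and `M_q(s)` is
  defined iff such a `t` exists; determinism makes `t` unique. -/
  inductive MEval (M : MTT Q S D) : Q → RTree (Option S) → RTree (PL Q D) → Prop
    | atX (q : Q) :
        MEval M q (.node none [])
          (.node (.st q) ((List.range (M.prm q)).map fun j => .node (.pr j) []))
    | step {q : Q} {σ : S} {ss : List (RTree (Option S))} {r : MRhs Q D}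
        {t : RTree (PL Q D)} :
        M.rules q σ = some r → MExpand M ss r t → MEval M q (.node (some σ) ss) t

  /-- Evaluation of a right-hand side with current input subtrees `ss`. -/
  inductive MExpand (M : MTT Q S D) :
      List (RTree (Option S)) → MRhs Q D → RTree (PL Q D) → Prop
    | out {ss d ts us} : MExpandList M ss ts us →
        MExpand M ss (.out d ts) (.node (.out d) us)
    | param {ss j} : MExpand M ss (.param j) (.node (.pr j) [])
    | call {ss : List (RTree (Option S))} {q : Q} {i : ℕ} {ps : List (MRhs Q D)}
        {si : RTree (Option S)} {vs : List (RTree (PL Q D))} {u : RTree (PL Q D)} :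
        ss[i]? = some si → MExpandList M ss ps vs → MEval M q si u →
        MExpand M ss (.call q i ps) (psubst vs u)

  inductive MExpandList (M : MTT Q S D) :
      List (RTree (Option S)) → List (MRhs Q D) → List (RTree (PL Q D)) → Prop
    | nil {ss} : MExpandList M ss [] []
    | cons {ss t ts u us} : MExpand M ss t u → MExpandList M ss ts us →
        MExpandList M ss (t :: ts) (u :: us)
end

/-- The translation `τ_M ⊆ T_Σ × T_Δ` realized by a macro tree transducer `M`
(the graph of the partial function `τ_M : T_Σ ⇀ T_Δ`). -/
def MTT.tau (M : MTT Q S D) : Set (RTree S × RTree D) :=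
  {p | RTree.WF M.rkS p.1 ∧ MEval M M.init (RTree.map some p.1) (RTree.map PL.out p.2)}

mutual
  /-- The height of a right-hand side, viewed as a tree over `Δ ∪ Q ∪ X ∪ Y`
  (a state call `q(x_i, ps)` has the leaf `x_i` as an additional child). -/
  def rhsHeight {Q D : Type} : MRhs Q D → ℕ
    | .out _ ts => 1 + rhsHeightList ts
    | .param _ => 1
    | .call _ _ ps => 1 + max 1 (rhsHeightList ps)
  def rhsHeightList {Q D : Type} : List (MRhs Q D) → ℕ
    | [] => 0
    | t :: ts => max (rhsHeight t) (rhsHeightList ts)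
end
section Aux

variable {Q S D : Type} {α : Type}

mutual
  def NoPr {Q D : Type} : RTree (PL Q D) → Prop
    | .node (.pr _) _ => False
    | .node (.out _) ts => NoPrL ts
    | .node (.st _) ts => NoPrL ts
  def NoPrL {Q D : Type} : List (RTree (PL Q D)) → Prop
    | [] => True
    | t :: ts => NoPr t ∧ NoPrL ts
end

mutual
  def OnlyOut {Q D : Type} : RTree (PL Q D) → Prop
    | .node (.out _) ts => OnlyOutL ts
    | .node (.st _) _ => False
    | .node (.pr _) _ => False
  def OnlyOutL {Q D : Type} : List (RTree (PL Q D)) → Prop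
    | [] => True
    | t :: ts => OnlyOut t ∧ OnlyOutL ts
end

mutual
theorem onlyOut_noPr : ∀ t : RTree (PL Q D), OnlyOut t → NoPr t
  | .node (.out d) ts, h => by
      rw [OnlyOut] at h; rw [NoPr]; exact onlyOut_noPrL ts h
  | .node (.st _) _, h => h.elim
  | .node (.pr _) _, h => h.elim
theorem onlyOut_noPrL : ∀ ts : List (RTree (PL Q D)), OnlyOutL ts → NoPrL ts
  | [], _ => trivial
  | t :: ts, h => by
      rw [OnlyOutL] at h; rw [NoPrL]
      exact ⟨onlyOut_noPr t h.1, onlyOut_noPrL ts h.2⟩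
end

mutual
theorem psubst_id (vs : List (RTree (PL Q D))) :
    ∀ t, NoPr t → psubst vs t = t
  | .node (.out d) ts, h => by
      rw [NoPr] at h; rw [psubst, psubst_idL vs ts h]
  | .node (.st q) ts, h => by
      rw [NoPr] at h; rw [psubst, psubst_idL vs ts h]
  | .node (.pr _) _, h => h.elim
theorem psubst_idL (vs : List (RTree (PL Q D))) :
    ∀ ts, NoPrL ts → psubstList vs ts = ts
  | [], _ => rfl
  | t :: ts, h => by
      rw [NoPrL] at h; rw [psubstList, psubst_id vs t h.1, psubst_idL vs ts h.2]
end

mutual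
theorem onlyOut_pure : ∀ t : RTree (PL Q D), OnlyOut t → ∃ d, t = RTree.map PL.out d
  | .node (.out d) ts, h => by
      rw [OnlyOut] at h
      obtain ⟨ds, hds⟩ := onlyOut_pureL ts h
      exact ⟨.node d ds, by rw [RTree.map, hds]⟩
  | .node (.st _) _, h => h.elim
  | .node (.pr _) _, h => h.elim
theorem onlyOut_pureL : ∀ ts : List (RTree (PL Q D)), OnlyOutL ts →
    ∃ ds, ts = RTree.mapList PL.out ds
  | [], _ => ⟨[], rfl⟩
  | t :: ts, h => by
      rw [OnlyOutL] at h
      obtain ⟨d, hd⟩ := onlyOut_pure t h.1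
      obtain ⟨ds, hds⟩ := onlyOut_pureL ts h.2
      exact ⟨d :: ds, by rw [RTree.mapList, ← hd, ← hds]⟩
end

theorem rhsHeight_pos : ∀ r : MRhs Q D, 1 ≤ rhsHeight r
  | .out _ _ => by rw [rhsHeight]; omega
  | .param _ => le_refl 1
  | .call _ _ _ => by rw [rhsHeight]; omega

mutual
  def completeT (a : S) : RTree (Option S) → RTree (Option S)
    | .node none _ => .node (some a) []
    | .node (some σ) ts => .node (some σ) (completeTL a ts)
  def completeTL (a : S) : List (RTree (Option S)) → List (RTree (Option S))
    | [] => []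
    | t :: ts => completeT a t :: completeTL a ts
end

theorem completeTL_eq_map (a : S) : ∀ ts, completeTL a ts = ts.map (completeT a)
  | [] => rfl
  | t :: ts => by rw [completeTL, completeTL_eq_map a ts, List.map_cons]

theorem mapList_eq_map {β : Type} (f : α → β) :
    ∀ ts : List (RTree α), RTree.mapList f ts = ts.map (RTree.map f)
  | [] => rfl
  | t :: ts => by rw [RTree.mapList, mapList_eq_map f ts, List.map_cons]

theorem exists_rank0 {rk : α → ℕ} : ∀ s : RTree α, RTree.WF rk s → ∃ a, rk a = 0
  | .node a ts, h => by
      cases h with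
      | node hlen hmem =>
        cases ts with
        | nil => exact ⟨a, hlen.symm⟩
        | cons t ts' => exact exists_rank0 t (hmem t (by simp))

end Aux
theorem mem_of_getElem?' {α : Type} {l : List α} {i : ℕ} {a : α}
    (h : l[i]? = some a) : a ∈ l := by
  obtain ⟨hi, rfl⟩ := List.getElem?_eq_some_iff.mp h
  exact List.getElem_mem hi
section Det
variable {Q S D : Type}

mutual
theorem expandDet (M : MTT Q S D) {ss : List (RTree (Option S))}
    (ih : ∀ si ∈ ss, ∀ q t t', MEval M q si t → MEval M q si t' → t = t') :
    ∀ (r : MRhs Q D) {t t'}, MExpand M ss r t → MExpand M ss r t' → t = t'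
  | .out d ts, _, _, h1, h2 => by
      cases h1 with
      | out hl1 =>
        cases h2 with
        | out hl2 => rw [expandListDet M ih ts hl1 hl2]
  | .param j, _, _, h1, h2 => by cases h1; cases h2; rfl
  | .call q i ps, _, _, h1, h2 => by
      cases h1 with
      | call hget1 hps1 hev1 =>
        cases h2 with
        | call hget2 hps2 hev2 =>
          rename_i si1 vs1 u1 si2 vs2 u2
          rw [hget1] at hget2
          injection hget2 with hsi; subst hsi
          rw [expandListDet M ih ps hps1 hps2,
            ih si1 (mem_of_getElem?' hget1) q u1 u2 hev1 hev2]
theorem expandListDet (M : MTT Q S D) {ss : List (RTree (Option S))}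
    (ih : ∀ si ∈ ss, ∀ q t t', MEval M q si t → MEval M q si t' → t = t') :
    ∀ (rs : List (MRhs Q D)) {us us'},
      MExpandList M ss rs us → MExpandList M ss rs us' → us = us'
  | [], _, _, h1, h2 => by cases h1; cases h2; rfl
  | r :: rs, _, _, h1, h2 => by
      cases h1 with
      | cons he1 hl1 =>
        cases h2 with
        | cons he2 hl2 =>
          rw [expandDet M ih r he1 he2, expandListDet M ih rs hl1 hl2]
end

theorem evalDet' (M : MTT Q S D) :
    ∀ (s : RTree (Option S)) (q : Q) {t t'}, MEval M q s t → MEval M q s t' → t = t'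
  | .node none ss, q, t, t', h1, h2 => by
      cases h1; cases h2; rfl
  | .node (some σ) ss, q, t, t', h1, h2 => by
      cases h1 with
      | step hr1 he1 =>
        cases h2 with
        | step hr2 he2 =>
          rw [hr1] at hr2
          injection hr2 with hrr; subst hrr
          exact expandDet M
            (fun si hsi q t t' => evalDet' M si q)
            _ he1 he2
termination_by s => sizeOf s
decreasing_by
  exact Nat.lt_trans (List.sizeOf_lt_of_mem hsi) (by simp)

end Det
section Exists
variable {Q S D : Type}

theorem expand_exists {M : MTT Q S D} {r : MRhs Q D}
    (h : RhsWF M.rkD M.prm 0 0 r) :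
    ∀ ss, ∃ t, MExpand M ss r t ∧ OnlyOut t ∧ RTree.height t = rhsHeight r := by
  induction h with
  | @out d ts hlen hmem ih =>
      intro ss
      have : ∀ ts' : List (MRhs Q D), (∀ t ∈ ts', ∀ ss,
            ∃ u, MExpand M ss t u ∧ OnlyOut u ∧ RTree.height u = rhsHeight t) →
          ∃ us, MExpandList M ss ts' us ∧ OnlyOutL us ∧
            RTree.heightList us = rhsHeightList ts' := by
        intro ts'
        induction ts' with
        | nil => exact fun _ => ⟨[], MExpandList.nil, trivial, rfl⟩
        | cons t ts'' ihl =>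
            intro hall
            obtain ⟨u, hu1, hu2, hu3⟩ := hall t (by simp) ss
            obtain ⟨us, h1, h2, h3⟩ := ihl (fun t' ht' => hall t' (by simp [ht']))
            exact ⟨u :: us, MExpandList.cons hu1 h1, ⟨hu2, h2⟩,
              by rw [RTree.heightList, rhsHeightList, hu3, h3]⟩
      obtain ⟨us, h1, h2, h3⟩ := this ts ih
      exact ⟨.node (.out d) us, MExpand.out h1, by rw [OnlyOut]; exact h2,
        by rw [RTree.height, rhsHeight, h3]⟩
  | param hj => exact absurd hj (Nat.not_lt_zero _)
  | call hi _ _ _ => exact absurd hi (Nat.not_lt_zero _)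

end Exists
section LemB
variable {Q S D : Type}

mutual
theorem lemBExp (M : MTT Q S D) (a : S) (c : ℕ) (hc : 1 ≤ c) :
    ∀ (r : MRhs Q D) {k : ℕ} {ss : List (RTree (Option S))} {t : RTree (PL Q D)},
      RhsWF M.rkD M.prm k 0 r → MExpand M ss r t →
      (∀ si ∈ ss, ∀ q ξ, MEval M q si ξ → NoPr ξ ∧
        ∃ ξ', MEval M q (completeT a si) ξ' ∧ OnlyOut ξ' ∧
          RTree.height ξ ≤ RTree.height ξ' ∧
          RTree.height ξ' + 1 ≤ RTree.height ξ + c) →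
      NoPr t ∧ ∃ t', MExpand M (completeTL a ss) r t' ∧ OnlyOut t' ∧
        RTree.height t ≤ RTree.height t' ∧
        RTree.height t' + 1 ≤ RTree.height t + c
  | .out d ts, k, ss, _, hwf, hexp, ih => by
      cases hexp with
      | out hl =>
        rename_i us
        have hwf' : ∀ r' ∈ ts, RhsWF M.rkD M.prm k 0 r' := by
          cases hwf with | out _ h2 => exact h2
        obtain ⟨hnp, us', h1, h2, h3, h4⟩ := lemBExpList M a c hc ts hwf' hl ih
        refine ⟨by rw [NoPr]; exact hnp, .node (.out d) us', MExpand.out h1,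
          by rw [OnlyOut]; exact h2, ?_, ?_⟩ <;> rw [RTree.height, RTree.height] <;> omega
  | .param j, k, ss, _, hwf, hexp, ih => by
      cases hwf with | param hj => exact absurd hj (Nat.not_lt_zero _)
  | .call q i ps, k, ss, _, hwf, hexp, ih => by
      have hwf' : ∀ r' ∈ ps, RhsWF M.rkD M.prm k 0 r' := by
        cases hwf with | call _ _ h3 => exact h3
      cases hexp with
      | call hget hps hev =>
        rename_i si vs u
        obtain ⟨hnpu, u', hu1, hu2, hu3, hu4⟩ :=
          ih si (mem_of_getElem?' hget) q u hev
        obtain ⟨_, vs', hv1, _, _, _⟩ := lemBExpList M a c hc ps hwf' hps ih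
        have hget' : (completeTL a ss)[i]? = some (completeT a si) := by
          rw [completeTL_eq_map, List.getElem?_map, hget, Option.map_some]
        have e1 : psubst vs u = u := psubst_id vs u hnpu
        have e2 : psubst vs' u' = u' := psubst_id vs' u' (onlyOut_noPr u' hu2)
        exact ⟨by rw [e1]; exact hnpu, psubst vs' u',
          MExpand.call hget' hv1 hu1, by rw [e2]; exact hu2,
          by rw [e1, e2]; exact hu3, by rw [e1, e2]; exact hu4⟩
theorem lemBExpList (M : MTT Q S D) (a : S) (c : ℕ) (hc : 1 ≤ c) :
    ∀ (rs : List (MRhs Q D)) {k : ℕ} {ss : List (RTree (Option S))}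
      {us : List (RTree (PL Q D))},
      (∀ r' ∈ rs, RhsWF M.rkD M.prm k 0 r') → MExpandList M ss rs us →
      (∀ si ∈ ss, ∀ q ξ, MEval M q si ξ → NoPr ξ ∧
        ∃ ξ', MEval M q (completeT a si) ξ' ∧ OnlyOut ξ' ∧
          RTree.height ξ ≤ RTree.height ξ' ∧
          RTree.height ξ' + 1 ≤ RTree.height ξ + c) →
      NoPrL us ∧ ∃ us', MExpandList M (completeTL a ss) rs us' ∧ OnlyOutL us' ∧
        RTree.heightList us ≤ RTree.heightList us' ∧
        RTree.heightList us' + 1 ≤ RTree.heightList us + c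
  | [], k, ss, _, hwf, hl, ih => by
      cases hl
      exact ⟨trivial, [], MExpandList.nil, trivial, le_refl _, by
        rw [RTree.heightList]; omega⟩
  | r :: rs, k, ss, _, hwf, hl, ih => by
      cases hl with
      | cons he hls =>
        obtain ⟨hnp, t', h1, h2, h3, h4⟩ :=
          lemBExp M a c hc r (hwf r (by simp)) he ih
        obtain ⟨hnpl, us', g1, g2, g3, g4⟩ :=
          lemBExpList M a c hc rs (fun r' hr' => hwf r' (by simp [hr'])) hls ih
        refine ⟨⟨hnp, hnpl⟩, t' :: us', MExpandList.cons h1 g1, ⟨h2, g2⟩, ?_, ?_⟩ <;>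
          rw [RTree.heightList, RTree.heightList] <;> omega
end

theorem lemB (M : MTT Q S D) (a : S) (c : ℕ)
    (htd : IsTopDown M) (hp : MTT.Proper M) (hc : 1 ≤ c)
    (ha : M.rkS a = 0)
    (htot : ∀ q, (M.rules q a).isSome)
    (hmax : ∀ q r, M.rules q a = some r → rhsHeight r ≤ c) :
    ∀ (s : RTree (Option S)) {q : Q} {ξ : RTree (PL Q D)}, MEval M q s ξ →
      NoPr ξ ∧ ∃ ξ', MEval M q (completeT a s) ξ' ∧ OnlyOut ξ' ∧
        RTree.height ξ ≤ RTree.height ξ' ∧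
        RTree.height ξ' + 1 ≤ RTree.height ξ + c
  | .node none ss, q, ξ, h => by
      cases h
      obtain ⟨r, hr⟩ := Option.isSome_iff_exists.mp (htot q)
      have hwf : RhsWF M.rkD M.prm 0 0 r := by
        have := hp.2 q a r hr
        rwa [ha, htd q] at this
      obtain ⟨t, ht1, ht2, ht3⟩ := expand_exists hwf []
      simp only [htd q, List.range_zero, List.map_nil]
      have hpos := rhsHeight_pos r
      have hm := hmax q r hr
      refine ⟨by rw [NoPr]; trivial, t,
        by rw [completeT]; exact MEval.step hr ht1, ht2, ?_, ?_⟩ <;>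
        rw [RTree.height, RTree.heightList, ht3] <;> omega
  | .node (some σ) ss, q, ξ, h => by
      cases h with
      | step hr he =>
        rename_i r
        have hwf : RhsWF M.rkD M.prm (M.rkS σ) 0 r := by
          have := hp.2 q σ r hr; rwa [htd q] at this
        obtain ⟨hnp, t', h1, h2, h3, h4⟩ := lemBExp M a c hc r hwf he
          (fun si hsi q' ξ' hev => lemB M a c htd hp hc ha htot hmax si hev)
        exact ⟨hnp, t', by rw [completeT]; exact MEval.step hr h1, h2, h3, h4⟩
termination_by s => sizeOf s
decreasing_by
  have h1 := List.sizeOf_lt_of_mem hsi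
  simp_all
  omega

end LemB
section WFAux
variable {S : Type} {α : Type}

def rkO (rk : S → ℕ) : Option S → ℕ := fun o => o.elim 0 rk

theorem wf_map_some {rk : S → ℕ} {s : RTree S} (h : RTree.WF rk s) :
    RTree.WF (rkO rk) (RTree.map some s) := by
  induction h with
  | @node a ts hlen hmem ih =>
      rw [RTree.map]
      refine RTree.WF.node ?_ ?_
      · rw [mapList_eq_map]; simpa [rkO] using hlen
      · intro t' ht'
        rw [mapList_eq_map] at ht'
        obtain ⟨t, ht, rfl⟩ := List.mem_map.mp ht'
        exact ih t ht

theorem wf_replace {rk : α → ℕ} {t : RTree α} {u : List ℕ} {r t' : RTree α}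
    (hrep : RTree.ReplaceAt t u r t') (hwf : RTree.WF rk t) (hr : RTree.WF rk r) :
    RTree.WF rk t' := by
  induction hrep with
  | here => exact hr
  | @child a ts i u r ti ti' hget _ ih =>
      cases hwf with
      | node hlen hmem =>
        refine RTree.WF.node (by rw [List.length_set]; exact hlen) ?_
        intro t'' ht''
        rcases List.mem_or_eq_of_mem_set ht'' with h | h
        · exact hmem t'' h
        · subst h; exact ih (hmem ti (mem_of_getElem?' hget)) hr

mutual
theorem complete_pure {rk : S → ℕ} (a : S) (ha : rk a = 0) :
    ∀ pt : RTree (Option S), RTree.WF (rkO rk) pt →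
      ∃ s', completeT a pt = RTree.map some s' ∧ RTree.WF rk s'
  | .node none ts, _ => by
      refine ⟨.node a [], ?_, RTree.WF.node (by simp [ha]) (by simp)⟩
      rw [completeT, RTree.map, RTree.mapList]
  | .node (some σ) ts, h => by
      have hlen : ts.length = rk σ := by cases h with | node h1 _ => exact h1
      have hmem : ∀ t ∈ ts, RTree.WF (rkO rk) t := by
        cases h with | node _ h2 => exact h2
      obtain ⟨ss', h1, h2, h3⟩ := complete_pureL a ha ts hmem
      refine ⟨.node σ ss', ?_, RTree.WF.node (by omega) h3⟩
      rw [completeT, RTree.map, h1]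
theorem complete_pureL {rk : S → ℕ} (a : S) (ha : rk a = 0) :
    ∀ ts : List (RTree (Option S)), (∀ t ∈ ts, RTree.WF (rkO rk) t) →
      ∃ ss' : List (RTree S), completeTL a ts = RTree.mapList some ss' ∧
        ss'.length = ts.length ∧ ∀ t ∈ ss', RTree.WF rk t
  | [], _ => ⟨[], rfl, rfl, by simp⟩
  | t :: ts, h => by
      obtain ⟨s', h1, h2⟩ := complete_pure a ha t (h t (by simp))
      obtain ⟨ss', g1, g2, g3⟩ := complete_pureL a ha ts (fun t' ht' => h t' (by simp [ht']))
      refine ⟨s' :: ss', ?_, by simp [g2], ?_⟩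
      · rw [completeTL, RTree.mapList, h1, g1]
      · intro t' ht'
        rcases List.mem_cons.mp ht' with h | h
        · subst h; exact h2
        · exact g3 t' h
end

theorem xLeaf_wf {rk : S → ℕ} : RTree.WF (rkO rk) (xLeaf : RTree (Option S)) :=
  RTree.WF.node (by simp [rkO]) (by simp)

end WFAux
mutual
theorem height_map {α β : Type} (f : α → β) :
    ∀ t : RTree α, (RTree.map f t).height = t.height
  | .node a ts => by rw [RTree.map, RTree.height, RTree.height, height_mapL f ts]
theorem height_mapL {α β : Type} (f : α → β) :
    ∀ ts : List (RTree α), RTree.heightList (RTree.mapList f ts) = RTree.heightList ts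
  | [] => rfl
  | t :: ts => by
      rw [RTree.mapList, RTree.heightList, RTree.heightList, height_map f t,
        height_mapL f ts]
end

/-! ## Statement 2

For equivalent total deterministic top-down tree transducers the height-balance is
bounded by `c`, the maximal height of a right-hand side of a rule for a rank-0
input symbol: for every input tree `s` and node `u` of `s`,
`|height(M1(s[u←x])) − height(M2(s[u←x]))| ≤ c`. -/
theorem equivalent_total_tdtt_height_balance {Q1 Q2 S D : Type}
    [Fintype Q1] [Fintype Q2] [Fintype S] [Fintype D]
    (M1 : MTT Q1 S D) (M2 : MTT Q2 S D)
    (hp1 : MTT.Proper M1) (hp2 : MTT.Proper M2)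
    (htd1 : IsTopDown M1) (htd2 : IsTopDown M2)
    (htot1 : MTT.Total M1) (htot2 : MTT.Total M2)
    (hS : M1.rkS = M2.rkS) (hD : M1.rkD = M2.rkD)
    (hequiv : MTT.tau M1 = MTT.tau M2)
    (c : ℕ)
    (hmax1 : ∀ q σ r, M1.rkS σ = 0 → M1.rules q σ = some r → rhsHeight r ≤ c)
    (hmax2 : ∀ q σ r, M2.rkS σ = 0 → M2.rules q σ = some r → rhsHeight r ≤ c) :
    ∀ s u pt, RTree.WF M1.rkS s →
      RTree.ReplaceAt (RTree.map some s) u xLeaf pt →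
      ∀ ξ1 ξ2, MEval M1 M1.init pt ξ1 → MEval M2 M2.init pt ξ2 →
        |(ξ1.height : ℤ) - (ξ2.height : ℤ)| ≤ c := by
  intro s u pt hwf hrep ξ1 ξ2 h1 h2
  obtain ⟨a, ha1⟩ := exists_rank0 s hwf
  have ha2 : M2.rkS a = 0 := by rw [← hS]; exact ha1
  obtain ⟨r0, hr0⟩ := Option.isSome_iff_exists.mp (htot1 M1.init a)
  have hc : 1 ≤ c := le_trans (rhsHeight_pos r0) (hmax1 _ _ _ ha1 hr0)
  obtain ⟨hnp1, ξ1', hev1, ho1, hl1, hu1⟩ :=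
    lemB M1 a c htd1 hp1 hc ha1 (fun q => htot1 q a)
      (fun q r hr => hmax1 q a r ha1 hr) pt h1
  obtain ⟨hnp2, ξ2', hev2, ho2, hl2, hu2⟩ :=
    lemB M2 a c htd2 hp2 hc ha2 (fun q => htot2 q a)
      (fun q r hr => hmax2 q a r ha2 hr) pt h2
  have hptwf : RTree.WF (rkO M1.rkS) pt := wf_replace hrep (wf_map_some hwf) xLeaf_wf
  obtain ⟨s', hs'eq, hs'wf⟩ := complete_pure a ha1 pt hptwf
  obtain ⟨d1, hd1⟩ := onlyOut_pure ξ1' ho1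
  obtain ⟨d2, hd2⟩ := onlyOut_pure ξ2' ho2
  have ht1 : (s', d1) ∈ MTT.tau M1 := ⟨hs'wf, by rw [← hs'eq, ← hd1]; exact hev1⟩
  rw [hequiv] at ht1
  obtain ⟨-, hm2run⟩ := ht1
  have heq : ξ2' = RTree.map PL.out d1 :=
    evalDet' M2 (RTree.map some s') M2.init (by rw [← hs'eq]; exact hev2) hm2run
  have hhe : RTree.height ξ1' = RTree.height ξ2' := by
    rw [heq, hd1, height_map, height_map]
  rw [abs_sub_le_iff]
  constructor <;> omega
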